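/- Let n > 2 and let Φ be an admissible hyperbolic generator with Φ(1) = 0 and Φ(1/(n−1)) ≠ 0. Then the generated hyperbolic negator N_Φ is not involutive: for the vertex distribution V = (1,0,…,0) one has N_Φ(V) = (0, 1/(n−1), …, 1/(n−1)) and N_Φ²(V) ≠ V. In particular the Yager hyperbolic negator is not involutive for n > 2. -/

import Mathlib

/-- Hyperbolic numbers in idempotent coordinates. -/
noncomputable abbrev HypD : Type := ℝ × ℝ

/-- The hyperbolic order: componentwise comparison of idempotent components. -/
def hle (z w : HypD) : Prop := z.1 ≤ w.1 ∧ z.2 ≤ w.2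

/-- The hyperbolic unit square `[0,1]_𝔻`. -/
def unitSq (z : HypD) : Prop := 0 ≤ z.1 ∧ z.1 ≤ 1 ∧ 0 ≤ z.2 ∧ z.2 ≤ 1

/-- The generated negator on hyperbolic distributions of total mass `1`
(both idempotent components active): normalize `Φ` entrywise in each component. -/
lemma sum_if_fin {n : ℕ} (hn : 1 ≤ n) (i0 : Fin n) (a b : ℝ) :
    ∑ i : Fin n, (if i = i0 then a else b) = a + ((n : ℝ) - 1) * b := by
  classical
  rw [← Finset.add_sum_erase _ _ (Finset.mem_univ i0), if_pos rfl]
  congr 1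
  rw [Finset.sum_congr rfl (fun x hx => if_neg (Finset.ne_of_mem_erase hx)),
    Finset.sum_const, Finset.card_erase_of_mem (Finset.mem_univ i0),
    Finset.card_univ, Fintype.card_fin, nsmul_eq_mul, Nat.cast_sub hn,
    Nat.cast_one]

noncomputable def genNeg {n : ℕ} (Φ : HypD → HypD) (P : Fin n → HypD) :
    Fin n → HypD :=
  fun j => ((Φ (P j)).1 / ∑ i, (Φ (P i)).1, (Φ (P j)).2 / ∑ i, (Φ (P i)).2)

theorem stmt_19 (n : ℕ) (hn : 2 < n) (Φ : HypD → HypD)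
    (hΦpos : ∀ z, unitSq z → 0 ≤ (Φ z).1 ∧ 0 ≤ (Φ z).2)
    (hΦrev : ∀ z w, unitSq z → unitSq w → hle z w → hle (Φ w) (Φ z))
    (hadm : ∀ P : Fin n → HypD, (∀ j, unitSq (P j)) →
      ∑ j, (P j).1 = 1 → ∑ j, (P j).2 = 1 →
      0 < ∑ j, (Φ (P j)).1 ∧ 0 < ∑ j, (Φ (P j)).2)
    (hΦ1 : Φ (1, 1) = 0)
    (hΦq : Φ (((n : ℝ) - 1)⁻¹, ((n : ℝ) - 1)⁻¹) ≠ 0)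
    (V : Fin n → HypD)
    (hV : V = fun j => if j = (⟨0, by omega⟩ : Fin n) then ((1 : ℝ), (1 : ℝ)) else (0, 0)) :
    genNeg Φ V = (fun j => if j = (⟨0, by omega⟩ : Fin n) then (0, 0) else
      (((n : ℝ) - 1)⁻¹, ((n : ℝ) - 1)⁻¹)) ∧
    genNeg Φ (genNeg Φ V) ≠ V := by
  classical
  set i0 : Fin n := ⟨0, by omega⟩ with hi0
  have hn1 : 1 ≤ n := by omega
  have hnR : (0 : ℝ) < (n : ℝ) - 1 := by
    have : (2 : ℝ) < n := by exact_mod_cast hn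
    linarith
  set q : ℝ := ((n : ℝ) - 1)⁻¹ with hq
  have hq0 : 0 < q := inv_pos.mpr hnR
  have hq1 : q ≤ 1 := by
    rw [hq, inv_eq_one_div, div_le_one hnR]
    have : (2 : ℝ) < n := by exact_mod_cast hn
    linarith
  -- V is a valid distribution
  have hVsq : ∀ j, unitSq (V j) := by
    intro j; rw [hV]; dsimp only
    split <;> exact ⟨by norm_num, by norm_num, by norm_num, by norm_num⟩
  have hVs1 : ∑ j, (V j).1 = 1 := by
    rw [hV]; simp only [apply_ite Prod.fst]
    rw [sum_if_fin hn1]; ring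
  have hVs2 : ∑ j, (V j).2 = 1 := by
    rw [hV]; simp only [apply_ite Prod.snd]
    rw [sum_if_fin hn1]; ring
  obtain ⟨hS1, hS2⟩ := hadm V hVsq hVs1 hVs2
  -- closed forms of sums of Φ over V
  have hΦV : ∀ j, Φ (V j) = if j = i0 then (0 : HypD) else Φ (0, 0) := by
    have hΦ1' : Φ 1 = 0 := hΦ1
    intro j; rw [hV]; dsimp only
    split <;> simp [hΦ1, hΦ1']
  have hsum1 : ∑ i, (Φ (V i)).1 = ((n : ℝ) - 1) * (Φ (0, 0)).1 := by
    calc ∑ i, (Φ (V i)).1 = ∑ i : Fin n, (if i = i0 then (0:ℝ) else (Φ (0,0)).1) := by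
          refine Finset.sum_congr rfl fun i _ => ?_
          rw [hΦV i]; split <;> simp
      _ = ((n : ℝ) - 1) * (Φ (0, 0)).1 := by rw [sum_if_fin hn1]; ring
  have hsum2 : ∑ i, (Φ (V i)).2 = ((n : ℝ) - 1) * (Φ (0, 0)).2 := by
    calc ∑ i, (Φ (V i)).2 = ∑ i : Fin n, (if i = i0 then (0:ℝ) else (Φ (0,0)).2) := by
          refine Finset.sum_congr rfl fun i _ => ?_
          rw [hΦV i]; split <;> simp
      _ = ((n : ℝ) - 1) * (Φ (0, 0)).2 := by rw [sum_if_fin hn1]; ring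
  have ha1 : 0 < (Φ (0, 0)).1 := by
    by_contra h
    rw [hsum1] at hS1
    nlinarith
  have ha2 : 0 < (Φ (0, 0)).2 := by
    by_contra h
    rw [hsum2] at hS2
    nlinarith
  -- first claim
  have hW : genNeg Φ V = (fun j => if j = i0 then ((0:ℝ), (0:ℝ)) else (q, q)) := by
    funext j
    unfold genNeg
    rw [hsum1, hsum2, hΦV j]
    by_cases hj : j = i0
    · simp [hj]
    · rw [if_neg hj, if_neg hj]
      have e1 : (Φ (0,0)).1 / (((n:ℝ) - 1) * (Φ (0,0)).1) = q := by
        rw [hq, mul_comm, ← div_div, div_self (ne_of_gt ha1), one_div]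
      have e2 : (Φ (0,0)).2 / (((n:ℝ) - 1) * (Φ (0,0)).2) = q := by
        rw [hq, mul_comm, ← div_div, div_self (ne_of_gt ha2), one_div]
      rw [e1, e2]
  refine ⟨hW, ?_⟩
  -- second claim
  intro hcontra
  set W := genNeg Φ V with hWdef
  have hWsq : ∀ j, unitSq (W j) := by
    intro j; rw [hW]; dsimp only
    split
    · exact ⟨le_refl _, by norm_num, le_refl _, by norm_num⟩
    · exact ⟨le_of_lt hq0, hq1, le_of_lt hq0, hq1⟩
  have hWs1 : ∑ j, (W j).1 = 1 := by
    rw [hW]; simp only [apply_ite Prod.fst]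
    rw [sum_if_fin hn1, hq]
    field_simp
    norm_num
  have hWs2 : ∑ j, (W j).2 = 1 := by
    rw [hW]; simp only [apply_ite Prod.snd]
    rw [sum_if_fin hn1, hq]
    field_simp
    norm_num
  obtain ⟨hT1, hT2⟩ := hadm W hWsq hWs1 hWs2
  set j1 : Fin n := ⟨1, by omega⟩ with hj1
  have hj1ne : j1 ≠ i0 := by
    intro h
    have h' : (1 : ℕ) = 0 := congrArg Fin.val h
    exact one_ne_zero h'
  have hWj1 : W j1 = (q, q) := by rw [hW]; simp [hj1ne]
  have heval : genNeg Φ W j1 = V j1 := by rw [hcontra]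
  have hVj1 : V j1 = (0, 0) := by rw [hV]; simp [hj1ne]
  unfold genNeg at heval
  rw [hWj1, hVj1] at heval
  have h1 : (Φ (q, q)).1 / ∑ i, (Φ (W i)).1 = 0 := congrArg Prod.fst heval
  have h2 : (Φ (q, q)).2 / ∑ i, (Φ (W i)).2 = 0 := congrArg Prod.snd heval
  have hB1 : (Φ (q, q)).1 = 0 := by
    rcases div_eq_zero_iff.mp h1 with h | h
    · exact h
    · exact absurd h (ne_of_gt hT1)
  have hB2 : (Φ (q, q)).2 = 0 := by
    rcases div_eq_zero_iff.mp h2 with h | h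
    · exact h
    · exact absurd h (ne_of_gt hT2)
  exact hΦq (Prod.ext hB1 hB2)
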